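/- For real numbers λ > 1 and ν > 1, define g(λ, ν) = ln((ν+1)/(ν−1)) − λ·ln((λν+1)/(λν−1)). Then g(λ, ν) > 0. -/

import Mathlib

private lemma key_ineq (u : ℝ) (hu : 1 < u) :
    Real.log ((u + 1) / (u - 1)) < 2 * u / (u ^ 2 - 1) := by
  have h1 : (0:ℝ) < u - 1 := by linarith
  have ht : 1 < (u + 1) / (u - 1) := by
    rw [lt_div_iff₀ h1]; linarith
  have hpos : 0 < Real.log ((u + 1) / (u - 1)) := Real.log_pos ht
  have hs := Real.self_lt_sinh_iff.mpr hpos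
  rw [Real.sinh_eq, Real.exp_log (by linarith), Real.exp_neg,
    Real.exp_log (by linarith)] at hs
  have heq : ((u + 1) / (u - 1) - ((u + 1) / (u - 1))⁻¹) / 2 = 2 * u / (u ^ 2 - 1) := by
    have h2 : u + 1 ≠ 0 := by positivity
    have h3 : u ^ 2 - 1 ≠ 0 := by nlinarith
    field_simp
    ring
  linarith [heq ▸ hs]

private lemma phi_hasDeriv (ν : ℝ) (hν : 1 < ν) (x : ℝ) (hx : 1 ≤ x) :
    HasDerivAt (fun t : ℝ => t * (Real.log (t * ν + 1) - Real.log (t * ν - 1)))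
      ((Real.log (x * ν + 1) - Real.log (x * ν - 1)) +
        x * (ν / (x * ν + 1) - ν / (x * ν - 1))) x := by
  have hxν : 1 < x * ν := by nlinarith
  have h1 : HasDerivAt (fun t : ℝ => t * ν + 1) ν x := by
    simpa using ((hasDerivAt_id x).mul_const ν).add_const 1
  have h2 : HasDerivAt (fun t : ℝ => t * ν - 1) ν x := by
    simpa using ((hasDerivAt_id x).mul_const ν).sub_const 1
  have hl1 : HasDerivAt (fun t : ℝ => Real.log (t * ν + 1)) (ν / (x * ν + 1)) x :=
    h1.log (by linarith)
  have hl2 : HasDerivAt (fun t : ℝ => Real.log (t * ν - 1)) (ν / (x * ν - 1)) x :=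
    h2.log (by linarith)
  have := (hasDerivAt_id x).mul (hl1.sub hl2)
  exact this.congr_deriv (by simp only [id_eq, Pi.sub_apply]; ring)

theorem g_pos (l ν : ℝ) (hl : 1 < l) (hν : 1 < ν) :
    0 < Real.log ((ν + 1) / (ν - 1)) - l * Real.log ((l*ν + 1) / (l*ν - 1)) := by
  set φ : ℝ → ℝ := fun t => t * (Real.log (t * ν + 1) - Real.log (t * ν - 1)) with hφ
  have hanti : StrictAntiOn φ (Set.Ici 1) := by
    apply strictAntiOn_of_deriv_neg (convex_Ici 1)
    · intro x hx
      exact (phi_hasDeriv ν hν x hx).continuousAt.continuousWithinAt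
    · intro x hx
      rw [interior_Ici] at hx
      have hx1 : 1 < x := hx
      have hxν : 1 < x * ν := by nlinarith
      rw [(phi_hasDeriv ν hν x hx1.le).deriv]
      have hkey := key_ineq (x * ν) hxν
      have hlog : Real.log (x * ν + 1) - Real.log (x * ν - 1) =
          Real.log ((x * ν + 1) / (x * ν - 1)) :=
        (Real.log_div (by linarith) (by linarith)).symm
      have heq : x * (ν / (x * ν + 1) - ν / (x * ν - 1)) =
          -(2 * (x * ν) / ((x * ν) ^ 2 - 1)) := by
        have h2 : x * ν + 1 ≠ 0 := by linarith
        have h3 : x * ν - 1 ≠ 0 := by linarith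
        have h4 : (x * ν) ^ 2 - 1 ≠ 0 := by nlinarith
        rw [div_sub_div _ _ h2 h3, mul_div_assoc', eq_neg_iff_add_eq_zero,
          div_add_div _ _ (mul_ne_zero h2 h3) h4, div_eq_zero_iff]
        left; ring
      rw [hlog, heq]
      linarith
  have hmem1 : (1:ℝ) ∈ Set.Ici (1:ℝ) := Set.self_mem_Ici
  have hmeml : l ∈ Set.Ici (1:ℝ) := le_of_lt hl
  have := hanti hmem1 hmeml hl
  have h1ν : 1 < ν := hν
  have hφ1 : φ 1 = Real.log ((ν + 1) / (ν - 1)) := by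
    rw [hφ]
    simp only [one_mul]
    rw [Real.log_div (by linarith) (by linarith)]
  have hφl : φ l = l * Real.log ((l * ν + 1) / (l * ν - 1)) := by
    rw [hφ]
    simp only []
    rw [Real.log_div (by nlinarith) (by nlinarith)]
  rw [hφ1, hφl] at this
  linarith
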